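/- Let m₁ be a positive integer and c a real number such that (i − c)^{m₁} is purely imaginary (i.e., its real part is 0) and nonzero. Then there exists k ∈ {0, 1, …, m₁−1} with c = cot(π(2k+1)/(2m₁)). -/
import Mathlib

open Real

theorem stmt1 (m₁ : ℕ) (hm : 0 < m₁) (c : ℝ)
    (hre : ((Complex.I - (c : ℂ)) ^ m₁).re = 0)
    (hne : (Complex.I - (c : ℂ)) ^ m₁ ≠ 0) :
    ∃ k : ℕ, k < m₁ ∧ c = Real.cot (π * (2 * k + 1) / (2 * m₁)) := by
  set θ := π/2 + Real.arctan c with hθdef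
  have hθ0 : 0 < θ := by have := Real.neg_pi_div_two_lt_arctan c; unfold θ; linarith
  have hθπ : θ < π := by have := Real.arctan_lt_pi_div_two c; have := Real.pi_pos; unfold θ; linarith
  have hsin : 0 < Real.sin θ := Real.sin_pos_of_pos_of_lt_pi hθ0 hθπ
  have hcosarc : 0 < Real.cos (Real.arctan c) := Real.cos_arctan_pos c
  have hcot : Real.cos θ = -c * Real.sin θ := by
    rw [hθdef, Real.cos_add, Real.sin_add, Real.cos_pi_div_two, Real.sin_pi_div_two]
    have := Real.tan_arctan c
    rw [Real.tan_eq_sin_div_cos] at this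
    field_simp at this ⊢
    linarith [this]
  clear hθdef
  clear_value θ
  have hz : Complex.exp (θ * Complex.I) = (Real.sin θ : ℂ) * (Complex.I - c) := by
    rw [Complex.exp_mul_I, ← Complex.ofReal_cos, ← Complex.ofReal_sin, hcot]
    push_cast
    ring
  have hz' : Complex.I - (c : ℂ) = (Real.sin θ : ℂ)⁻¹ * Complex.exp (θ * Complex.I) := by
    rw [hz, inv_mul_cancel_left₀ (by exact_mod_cast hsin.ne' : (Real.sin θ : ℂ) ≠ 0)]
  have hrepow : ((Complex.I - (c : ℂ)) ^ m₁).re = ((Real.sin θ)⁻¹) ^ m₁ * Real.cos (m₁ * θ) := by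
    rw [hz', mul_pow, ← Complex.exp_nat_mul]
    have h1 : ((Real.sin θ : ℂ)⁻¹) ^ m₁ = ((((Real.sin θ)⁻¹) ^ m₁ : ℝ) : ℂ) := by push_cast; ring
    have h2 : (m₁ : ℂ) * (θ * Complex.I) = ((m₁ * θ : ℝ) : ℂ) * Complex.I := by push_cast; ring
    rw [h1, h2, Complex.re_ofReal_mul, Complex.exp_ofReal_mul_I_re]
  have hcos : Real.cos (m₁ * θ) = 0 := by
    rw [hrepow] at hre
    have : ((Real.sin θ)⁻¹) ^ m₁ ≠ 0 := pow_ne_zero _ (inv_ne_zero hsin.ne')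
    exact (mul_eq_zero.mp hre).resolve_left this
  obtain ⟨j, hj⟩ := Real.cos_eq_zero_iff.mp hcos
  have hπ := Real.pi_pos
  -- bounds on j
  have hmθ0 : 0 < (m₁ : ℝ) * θ := by positivity
  have hmθπ : (m₁ : ℝ) * θ < m₁ * π := by
    exact mul_lt_mul_of_pos_left hθπ (by exact_mod_cast hm)
  have hjlb : 0 ≤ j := by
    by_contra h
    push_neg at h
    have : (2 * (j : ℝ) + 1) ≤ -1 := by
      have : (j : ℝ) ≤ -1 := by exact_mod_cast Int.le_of_lt_add_one (by omega : j < -1 + 1)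
      linarith
    have h2 := mul_le_mul_of_nonneg_right this hπ.le
    linarith [hj, hmθ0]
  have hjub : (j : ℝ) < m₁ := by
    by_contra h
    push_neg at h
    have h2 := mul_le_mul_of_nonneg_right (show (2*(m₁:ℝ)+1) ≤ 2*j+1 by linarith) hπ.le
    linarith [hj, hmθπ]
  have hjub' : j < (m₁ : ℤ) := by exact_mod_cast hjub
  refine ⟨m₁ - 1 - j.toNat, by omega, ?_⟩
  have hkval : ((m₁ - 1 - j.toNat : ℕ) : ℝ) = (m₁ : ℝ) - 1 - j := by
    have h1 : ((m₁ - 1 - j.toNat : ℕ) : ℤ) = (m₁ : ℤ) - 1 - j := by omega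
    exact_mod_cast congrArg (fun n : ℤ => (n : ℝ)) h1
  have hmne : (m₁ : ℝ) ≠ 0 := by positivity
  have hangle : π * (2 * ((m₁ - 1 - j.toNat : ℕ) : ℝ) + 1) / (2 * m₁) = π - θ := by
    rw [hkval]
    have hθval : θ = (2 * (j : ℝ) + 1) * π / (2 * m₁) := by
      field_simp
      linarith [hj]
    rw [hθval]
    field_simp
    ring
  rw [hangle, Real.cot_eq_cos_div_sin, Real.cos_pi_sub, Real.sin_pi_sub, hcot]
  field_simp
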